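/- Let n ≥ 1 be an integer and λ ∈ ℝ with (2−λ)·2n + λ ≠ 0. Then for all x ∈ ℝ: U*_{2n}(x, λ)/U*_{2n}(1, λ) = ((2n+1)/((2−λ)·2n + λ)) · Ũ_{2n}(x)/Ũ_{2n}(1) + ((1−λ)(2n−1)/((2−λ)·2n + λ)) · Ũ_{2n−2}(x)/Ũ_{2n−2}(1); in particular the normalized co-dilated Chebyshev polynomial of degree 2n is an affine combination of the normalized Chebyshev polynomials of the second kind of degrees 2n and 2n−2, the coefficients summing to 1. -/

import Mathlib

open Polynomial

lemma U_eval_one (k : ℤ) : (Polynomial.Chebyshev.U ℝ k).eval 1 = k + 1 := by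
  induction k using Polynomial.Chebyshev.induct with
  | zero => simp
  | one => simp [Polynomial.Chebyshev.U_one]; norm_num
  | add_two n h1 h2 =>
    rw [Polynomial.Chebyshev.U_add_two]
    push_cast at *
    simp [h1, h2]; ring
  | neg_add_one n h1 h2 =>
    have := Polynomial.Chebyshev.U_sub_one ℝ (-n)
    rw [this]
    push_cast at *
    simp [h1, h2]; ring

lemma two_T (k : ℤ) : 2 * Polynomial.Chebyshev.T ℝ k
    = Polynomial.Chebyshev.U ℝ k - Polynomial.Chebyshev.U ℝ (k - 2) := by
  rw [Polynomial.Chebyshev.T_eq_U_sub_X_mul_U, Polynomial.Chebyshev.U_sub_two]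
  ring

noncomputable section

/-- The monic Chebyshev polynomial of the first kind: `T̃_0 = 1`,
`T̃_n = 2^(1-n) T_n` for `n ≥ 1`. -/
def monicT (n : ℕ) : Polynomial ℝ :=
  if n = 0 then 1 else C ((2 : ℝ) ^ (n - 1 : ℕ))⁻¹ * Polynomial.Chebyshev.T ℝ n

/-- The monic Chebyshev polynomial of the second kind: `Ũ_n = 2^(-n) U_n`. -/
def monicU (n : ℕ) : Polynomial ℝ :=
  C ((2 : ℝ) ^ n)⁻¹ * Polynomial.Chebyshev.U ℝ n

/-- The co-dilated Chebyshev polynomial `U*_n(·, λ) = (2−λ) Ũ_n + (λ−1) T̃_n`. -/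
def Ustar (n : ℕ) (lam : ℝ) : Polynomial ℝ :=
  C (2 - lam) * monicU n + C (lam - 1) * monicT n

theorem codilated_chebyshev_affine_combination (n : ℕ) (hn : 1 ≤ n) (lam : ℝ)
    (h : (2 - lam) * (2 * n) + lam ≠ 0) :
    (∀ x : ℝ,
      (Ustar (2 * n) lam).eval x / (Ustar (2 * n) lam).eval 1 =
        (2 * n + 1) / ((2 - lam) * (2 * n) + lam) *
          ((monicU (2 * n)).eval x / (monicU (2 * n)).eval 1) +
        (1 - lam) * (2 * n - 1) / ((2 - lam) * (2 * n) + lam) *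
          ((monicU (2 * n - 2)).eval x / (monicU (2 * n - 2)).eval 1)) ∧
    (2 * n + 1) / ((2 - lam) * (2 * n) + lam) +
        (1 - lam) * (2 * n - 1) / ((2 - lam) * (2 * n) + lam) = 1 := by
  have hn2 : (2 * n : ℕ) ≠ 0 := by omega
  have hcast : ((2 * n - 2 : ℕ) : ℤ) = 2 * (n : ℤ) - 2 := by omega
  have hcastR : ((2 * n - 2 : ℕ) : ℝ) = 2 * (n : ℝ) - 2 := by
    have : (2 * n - 2 : ℕ) + 2 = 2 * n := by omega
    have := congrArg (Nat.cast : ℕ → ℝ) this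
    push_cast at this; linarith
  have hP : (0:ℝ) < 2 ^ (2 * n - 2 : ℕ) := by positivity
  set P : ℝ := 2 ^ (2 * n - 2 : ℕ) with hPdef
  have h2P : (2:ℝ) ^ (2 * n - 1 : ℕ) = 2 * P := by
    rw [hPdef, ← pow_succ']
    congr 1; omega
  have h4P : (2:ℝ) ^ (2 * n : ℕ) = 4 * P := by
    rw [hPdef, show (4:ℝ) = 2^2 by norm_num, ← pow_add]
    congr 1; omega
  -- eval-one facts
  have hU1 : (Polynomial.Chebyshev.U ℝ (2 * n : ℕ)).eval 1 = 2 * n + 1 := by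
    have := U_eval_one (2 * n : ℕ); push_cast at this; push_cast; linarith
  have hU2 : (Polynomial.Chebyshev.U ℝ ((2 * n - 2 : ℕ) : ℤ)).eval 1 = 2 * n - 1 := by
    rw [hcast, U_eval_one]; push_cast; ring
  have hTrel : ∀ y : ℝ, 2 * (Polynomial.Chebyshev.T ℝ (2 * n : ℕ)).eval y
      = (Polynomial.Chebyshev.U ℝ (2 * n : ℕ)).eval y
        - (Polynomial.Chebyshev.U ℝ ((2 * n - 2 : ℕ) : ℤ)).eval y := by
    intro y
    have := congrArg (eval y) (two_T (2 * n : ℕ))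
    simp only [eval_mul, eval_ofNat, eval_sub] at this
    rw [hcast]
    push_cast at this ⊢
    convert this using 3 <;> push_cast <;> ring
  have hT1 : (Polynomial.Chebyshev.T ℝ (2 * n : ℕ)).eval 1 = 1 := by
    have := hTrel 1; rw [hU1, hU2] at this; linarith
  -- nonzero denominators
  have hDn : (2 - lam) * (2 * (n:ℝ)) + lam ≠ 0 := h
  have hA : (2 * (n:ℝ) + 1) ≠ 0 := by positivity
  have hB : (2 * (n:ℝ) - 1) ≠ 0 := by
    have : (1:ℝ) ≤ n := by exact_mod_cast hn
    nlinarith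
  have hPne : P ≠ 0 := ne_of_gt hP
  -- eval of Ustar at 1
  have hstar1 : (Ustar (2 * n) lam).eval 1 = ((2 - lam) * (2 * n) + lam) / (4 * P) := by
    simp only [Ustar, monicU, monicT, if_neg hn2, eval_add, eval_mul, eval_C]
    rw [hU1, hT1, h2P, h4P]
    field_simp
    ring
  constructor
  · intro x
    have e1 : (Ustar (2 * n) lam).eval x
        = ((2 - lam) * (Polynomial.Chebyshev.U ℝ (2 * n : ℕ)).eval x
            + 2 * (lam - 1) * (Polynomial.Chebyshev.T ℝ (2 * n : ℕ)).eval x) / (4 * P) := by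
      simp only [Ustar, monicU, monicT, if_neg hn2, eval_add, eval_mul, eval_C]
      rw [h2P, h4P]
      field_simp
      ring
    have e2 : (monicU (2 * n)).eval x = (Polynomial.Chebyshev.U ℝ (2 * n : ℕ)).eval x / (4 * P) := by
      simp only [monicU, eval_mul, eval_C]; rw [h4P]; field_simp
    have e2' : (monicU (2 * n)).eval 1 = (2 * n + 1) / (4 * P) := by
      simp only [monicU, eval_mul, eval_C]; rw [h4P, hU1]; field_simp
    have e3 : (monicU (2 * n - 2)).eval x
        = ((Polynomial.Chebyshev.U ℝ (2 * n : ℕ)).eval x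
            - 2 * (Polynomial.Chebyshev.T ℝ (2 * n : ℕ)).eval x) / P := by
      simp only [monicU, eval_mul, eval_C]
      have hb : (Polynomial.Chebyshev.U ℝ ((2 * n - 2 : ℕ) : ℤ)).eval x
          = (Polynomial.Chebyshev.U ℝ (2 * n : ℕ)).eval x
            - 2 * (Polynomial.Chebyshev.T ℝ (2 * n : ℕ)).eval x := by linarith [hTrel x]
      rw [hb]; field_simp; rw [hPdef]; ring
    have e3' : (monicU (2 * n - 2)).eval 1 = (2 * n - 1) / P := by
      simp only [monicU, eval_mul, eval_C]; rw [hU2]; field_simp; exact hPdef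
    rw [hstar1, e1, e2, e2', e3, e3']
    field_simp
    ring
  · rw [← add_div, div_eq_one_iff_eq h]
    ring


end
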